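/- arXiv:2603.11648 — 5 statements merged into one kernel-verified Lean document; each statement's English description precedes it below -/
import Mathlib

section
/- For a visibly recursive automaton A, for all words cwr with c a call symbol, w well-matched, and r a return symbol, and all states p, q of A: there is a recursive run ⟨q, ε⟩ →^{cwr} ⟨p, ε⟩ if and only if there exists a procedural symbol J with f(J) = ⟨c, r⟩ such that q →^J p is a transition of A and w belongs to the recursive language L(A^J). -/
/-- A symbol of a pushdown alphabet: internal, call, or return. -/
inductive VSym (I C R : Type) : Type
  | int  : I → VSym I C R
  | call : C → VSym I C R
  | ret  : R → VSym I C R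

/-- The set of well-matched words over a pushdown alphabet. -/
inductive WellMatched {I C R : Type} : List (VSym I C R) → Prop
  | internal (u : List I) : WellMatched (u.map VSym.int)
  | bracket {w : List (VSym I C R)} (c : C) (r : R) :
      WellMatched w → WellMatched (VSym.call c :: w ++ [VSym.ret r])
  | concat {w₁ w₂ : List (VSym I C R)} :
      WellMatched w₁ → WellMatched w₂ → WellMatched (w₁ ++ w₂)

def VSym.isCall {I C R : Type} : VSym I C R → Bool
  | .call _ => true
  | _ => false

def VSym.isRet {I C R : Type} : VSym I C R → Bool
  | .ret _ => true
  | _ => false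

/-- The depth of a word: the maximal excess of call symbols over return symbols
in any prefix (the deepest level of unmatched calls at any point). -/
def VSym.depth {I C R : Type} (w : List (VSym I C R)) : ℕ :=
  (w.inits.map fun p => p.countP VSym.isCall - p.countP VSym.isRet).foldr max 0

/-- A visibly recursive automaton: a family of finite automata over the internal
and procedural symbols, identified by the component map `comp` (`none` denotes the
starting automaton `A^S`, `some J` the component automaton `A^J`), together with a
linking function `link` assigning to each procedural symbol a call/return pair.
Transitions of each component automaton stay within that component. -/
structure VRA (I C R P Q : Type) where
  /-- the linking function `f : Σ_proc → Σ_call × Σ_ret` -/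
  link : P → C × R
  /-- the component automaton each state belongs to (`none` = starting automaton) -/
  comp : Q → Option P
  init : Q → Prop
  final : Q → Prop
  intTrans : Q → I → Q → Prop
  procTrans : Q → P → Q → Prop
  intTrans_comp : ∀ ⦃q a p⦄, intTrans q a p → comp p = comp q
  procTrans_comp : ∀ ⦃q J p⦄, procTrans q J p → comp p = comp q

namespace VRA

variable {I C R P Q : Type}

/-- One step of a recursive run, on configurations (state, stack of states). -/
inductive Step (A : VRA I C R P Q) : Q × List Q → VSym I C R → Q × List Q → Prop
  | int {q q' : Q} {σ : List Q} {a : I} :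
      A.intTrans q a q' → Step A (q, σ) (VSym.int a) (q', σ)
  | call {q q' p : Q} {σ : List Q} {J : P} {c : C} :
      A.procTrans q J p → (A.link J).1 = c → A.comp q' = some J → A.init q' →
      Step A (q, σ) (VSym.call c) (q', p :: σ)
  | ret {q p : Q} {σ : List Q} {J : P} {r : R} :
      A.comp q = some J → A.final q → (A.link J).2 = r →
      Step A (q, p :: σ) (VSym.ret r) (p, σ)

/-- Recursive runs of a VRA. -/
inductive Run (A : VRA I C R P Q) : Q × List Q → List (VSym I C R) → Q × List Q → Prop
  | nil (cfg : Q × List Q) : Run A cfg [] cfg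
  | cons {cfg₁ cfg₂ cfg₃ : Q × List Q} {a : VSym I C R} {w : List (VSym I C R)} :
      Step A cfg₁ a cfg₂ → Run A cfg₂ w cfg₃ → Run A cfg₁ (a :: w) cfg₃

/-- The recursive language of the component automaton `A^J` (`J = none` is the
starting automaton): words with a recursive run from an initial state of the
component with empty stack to a final state of the component with empty stack. -/
def RecLang (A : VRA I C R P Q) (J : Option P) : Set (List (VSym I C R)) :=
  {w | ∃ qi qf, A.comp qi = J ∧ A.init qi ∧ A.comp qf = J ∧ A.final qf ∧
    Run A (qi, []) w (qf, [])}

/-- The language of a VRA: the recursive language of its starting automaton. -/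
def Lang (A : VRA I C R P Q) : Set (List (VSym I C R)) := A.RecLang none

/-- Regular runs: runs of the component automata viewed as ordinary finite
automata over the alphabet `Σ_int ∪ Σ_proc`. -/
inductive RegRun (A : VRA I C R P Q) : Q → List (I ⊕ P) → Q → Prop
  | nil (q : Q) : RegRun A q [] q
  | int {q q' p : Q} {a : I} {w : List (I ⊕ P)} :
      A.intTrans q a q' → RegRun A q' w p → RegRun A q (Sum.inl a :: w) p
  | proc {q q' p : Q} {J : P} {w : List (I ⊕ P)} :
      A.procTrans q J q' → RegRun A q' w p → RegRun A q (Sum.inr J :: w) p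

/-- The regular language of the component automaton `A^J`, over `Σ_int ∪ Σ_proc`. -/
def RegLang (A : VRA I C R P Q) (J : Option P) : Set (List (I ⊕ P)) :=
  {w | ∃ qi qf, A.comp qi = J ∧ A.init qi ∧ A.comp qf = J ∧ A.final qf ∧
    RegRun A qi w qf}

/-- A VRA is codeterministic if component automata linked to the same call/return
pair have pairwise disjoint recursive languages. -/
def Codeterministic (A : VRA I C R P Q) : Prop :=
  ∀ J J' : P, J ≠ J' → A.link J = A.link J' →
    A.RecLang (some J) ∩ A.RecLang (some J') = ∅

/-- A VRA is complete if every state has an outgoing transition on every symbol of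
`Σ_int ∪ Σ_proc`, and for every call/return pair the recursive languages of the
linked component automata cover all well-matched words. -/
def Complete (A : VRA I C R P Q) : Prop :=
  (∀ (q : Q) (a : I), ∃ p, A.intTrans q a p) ∧
  (∀ (q : Q) (J : P), ∃ p, A.procTrans q J p) ∧
  (∀ (c : C) (r : R),
    (⋃ J ∈ {J : P | A.link J = (c, r)}, A.RecLang (some J)) = {w | WellMatched w})

/-- A VRA is deterministic if every component automaton (including the starting
one) has a unique initial state and deterministic transitions, and procedural
transitions from a common state on procedural symbols with the same call symbol
agree on the procedural symbol. -/
def Deterministic (A : VRA I C R P Q) : Prop :=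
  (∀ J : Option P, ∃! q, A.comp q = J ∧ A.init q) ∧
  (∀ q a p p', A.intTrans q a p → A.intTrans q a p' → p = p') ∧
  (∀ q J p p', A.procTrans q J p → A.procTrans q J p' → p = p') ∧
  (∀ q J J' p p', A.procTrans q J p → A.procTrans q J' p' →
    (A.link J).1 = (A.link J').1 → J = J')

/-- All component automata of the VRA are complete DFAs: a unique initial state in
each component and exactly one outgoing transition per state and symbol. -/
def AllCompleteDFA (A : VRA I C R P Q) : Prop :=
  (∀ J : Option P, ∃! q, A.comp q = J ∧ A.init q) ∧
  (∀ (q : Q) (a : I), ∃! p, A.intTrans q a p) ∧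
  (∀ (q : Q) (J : P), ∃! p, A.procTrans q J p)

/-- The size of a VRA: number of states plus number of transitions. -/
noncomputable def size (A : VRA I C R P Q) : ℕ :=
  Nat.card Q + Nat.card {t : Q × I × Q // A.intTrans t.1 t.2.1 t.2.2}
    + Nat.card {t : Q × P × Q // A.procTrans t.1 t.2.1 t.2.2}

end VRA

namespace VRA

variable {I C R P Q : Type} {A : VRA I C R P Q}

lemma Run.append {cfg₁ cfg₂ cfg₃ : Q × List Q} {w₁ w₂ : List (VSym I C R)}
    (h₁ : Run A cfg₁ w₁ cfg₂) (h₂ : Run A cfg₂ w₂ cfg₃) :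
    Run A cfg₁ (w₁ ++ w₂) cfg₃ := by
  induction h₁ with
  | nil => exact h₂
  | cons s _ ih => exact Run.cons s (ih h₂)

lemma Run.split {cfg₁ cfg₃ : Q × List Q} {w₁ w₂ : List (VSym I C R)}
    (h : Run A cfg₁ (w₁ ++ w₂) cfg₃) :
    ∃ cfg₂, Run A cfg₁ w₁ cfg₂ ∧ Run A cfg₂ w₂ cfg₃ := by
  induction w₁ generalizing cfg₁ with
  | nil => exact ⟨cfg₁, Run.nil _, h⟩
  | cons a w ih =>
    cases h with
    | cons s hrest =>
      obtain ⟨cfg₂, h1, h2⟩ := ih hrest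
      exact ⟨cfg₂, Run.cons s h1, h2⟩

lemma run_int_stack {u : List I} {q p : Q} {σ σ' : List Q}
    (h : Run A (q, σ) (u.map VSym.int) (p, σ')) :
    A.comp p = A.comp q ∧ σ' = σ ∧ ∀ τ, Run A (q, τ) (u.map VSym.int) (p, τ) := by
  induction u generalizing q σ with
  | nil => cases h; exact ⟨rfl, rfl, fun τ => Run.nil _⟩
  | cons a u ih =>
    cases h with
    | cons s hrest =>
      cases s with
      | int ht =>
        obtain ⟨hcp, rfl, hτ⟩ := ih hrest
        exact ⟨hcp.trans (A.intTrans_comp ht), rfl,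
          fun τ => Run.cons (Step.int ht) (hτ τ)⟩

lemma run_wm_stack {w : List (VSym I C R)} (hw : WellMatched w) :
    ∀ {q p : Q} {σ σ' : List Q}, Run A (q, σ) w (p, σ') →
      A.comp p = A.comp q ∧ σ' = σ ∧ ∀ τ, Run A (q, τ) w (p, τ) := by
  induction hw with
  | internal u => exact fun h => run_int_stack h
  | @bracket w c r _ ih =>
    intro q p σ σ' h
    cases h with
    | cons s hrest =>
      cases s with
      | @call _ q₁ p₁ _ J _ ht hc hcomp hinit =>
        obtain ⟨⟨q₂, τ₂⟩, h1, h2⟩ := Run.split hrest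
        obtain ⟨hcp, rfl, hτ⟩ := ih h1
        cases h2 with
        | cons s2 h2' =>
          cases s2 with
          | ret hcomp2 hfin hr =>
            cases h2' with
            | nil =>
              exact ⟨A.procTrans_comp ht, rfl, fun τ =>
                Run.cons (Step.call ht hc hcomp hinit)
                  (Run.append (hτ (p :: τ))
                    (Run.cons (Step.ret hcomp2 hfin hr) (Run.nil _)))⟩
  | concat _ _ ih₁ ih₂ =>
    intro q p σ σ' h
    obtain ⟨⟨q₂, τ₂⟩, h1, h2⟩ := Run.split h
    obtain ⟨hc₁, rfl, hτ₁⟩ := ih₁ h1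
    obtain ⟨hc₂, rfl, hτ₂⟩ := ih₂ h2
    exact ⟨hc₂.trans hc₁, rfl, fun τ => Run.append (hτ₁ τ) (hτ₂ τ)⟩

end VRA

/-- for a call symbol `c`, a well-matched word `w` and a return
symbol `r`, there is a recursive run `⟨q,ε⟩ →^{cwr} ⟨p,ε⟩` iff there is a
procedural symbol `J` with `f(J) = ⟨c,r⟩`, a transition `q →^J p`, and
`w ∈ L(A^J)`. -/
theorem VRA.run_bracket_iff {I C R P Q : Type} (A : VRA I C R P Q)
    {c : C} {r : R} {w : List (VSym I C R)} (hw : WellMatched w) (q p : Q) :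
    A.Run (q, []) (VSym.call c :: w ++ [VSym.ret r]) (p, []) ↔
      ∃ J : P, A.link J = (c, r) ∧ A.procTrans q J p ∧ w ∈ A.RecLang (some J) := by
  constructor
  · intro h
    cases h with
    | cons s hrest =>
      cases s with
      | @call _ q₁ p₁ _ J _ ht hc hcomp hinit =>
        obtain ⟨⟨q₂, τ₂⟩, h1, h2⟩ := Run.split hrest
        obtain ⟨hcp, rfl, hτ⟩ := run_wm_stack hw h1
        cases h2 with
        | cons s2 h2' =>
          cases s2 with
          | @ret _ _ _ J' _ hcomp2 hfin hr =>
            cases h2' with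
            | nil =>
              have hJ : J' = J := by
                have := hcp.trans hcomp
                rw [hcomp2] at this
                exact (Option.some.injEq _ _ ▸ this)
              subst hJ
              refine ⟨J', ?_, ht, q₁, q₂, hcomp, hinit, hcomp2, hfin, hτ []⟩
              exact Prod.ext hc hr
  · rintro ⟨J, hlink, ht, qi, qf, hci, hii, hcf, hff, hrun⟩
    have hτ := (run_wm_stack hw hrun).2.2
    refine Run.cons (Step.call ht (by rw [hlink]) hci hii) ?_
    exact Run.append (hτ [p])
      (Run.cons (Step.ret hcf hff (by rw [hlink])) (Run.nil _))
end

section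
/- Every language of well-matched words accepted by a visibly recursive automaton is accepted by a visibly pushdown automaton, and conversely; i.e., VRAs and VPAs are equi-expressive over well-matched words. -/
/-- A visibly pushdown automaton over a pushdown alphabet, with stack alphabet Γ. -/
structure VPA (I C R Γ Q : Type) where
  init : Q → Prop
  final : Q → Prop
  intTrans : Q → I → Q → Prop
  callTrans : Q → C → Q → Γ → Prop
  retTrans : Q → R → Γ → Q → Prop

namespace VPA

variable {I C R Γ Q : Type}

inductive Step (B : VPA I C R Γ Q) : Q × List Γ → VSym I C R → Q × List Γ → Prop
  | int {q q' : Q} {σ : List Γ} {a : I} :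
      B.intTrans q a q' → Step B (q, σ) (VSym.int a) (q', σ)
  | call {q q' : Q} {σ : List Γ} {c : C} {γ : Γ} :
      B.callTrans q c q' γ → Step B (q, σ) (VSym.call c) (q', γ :: σ)
  | ret {q q' : Q} {σ : List Γ} {r : R} {γ : Γ} :
      B.retTrans q r γ q' → Step B (q, γ :: σ) (VSym.ret r) (q', σ)

inductive Run (B : VPA I C R Γ Q) : Q × List Γ → List (VSym I C R) → Q × List Γ → Prop
  | nil (cfg : Q × List Γ) : Run B cfg [] cfg
  | cons {cfg₁ cfg₂ cfg₃ : Q × List Γ} {a : VSym I C R} {w : List (VSym I C R)} :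
      Step B cfg₁ a cfg₂ → Run B cfg₂ w cfg₃ → Run B cfg₁ (a :: w) cfg₃

/-- The language of a VPA: words read from an initial state with empty stack to a
final state with empty stack. -/
def Lang (B : VPA I C R Γ Q) : Set (List (VSym I C R)) :=
  {w | ∃ qi qf, B.init qi ∧ B.final qf ∧ Run B (qi, []) w (qf, [])}

end VPA

section Equiexpressive

variable {I C R Γ P Q : Type}

/-! ### Auxiliary run lemmas -/

lemma vpaRunAppend {B : VPA I C R Γ Q} : ∀ {c1 : Q × List Γ} {w1 : List (VSym I C R)}
    {c2 : Q × List Γ}, VPA.Run B c1 w1 c2 → ∀ {w2 c3}, VPA.Run B c2 w2 c3 →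
    VPA.Run B c1 (w1 ++ w2) c3
  | _, _, _, .nil _, _, _, h2 => h2
  | _, _, _, .cons hs h1, _, _, h2 => .cons hs (vpaRunAppend h1 h2)

lemma vraRunAppend {A : VRA I C R P Q} : ∀ {c1 : Q × List Q} {w1 : List (VSym I C R)}
    {c2 : Q × List Q}, VRA.Run A c1 w1 c2 → ∀ {w2 c3}, VRA.Run A c2 w2 c3 →
    VRA.Run A c1 (w1 ++ w2) c3
  | _, _, _, .nil _, _, _, h2 => h2
  | _, _, _, .cons hs h1, _, _, h2 => .cons hs (vraRunAppend h1 h2)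

lemma vpaLiftStep {B : VPA I C R Γ Q} (σ : List Γ) {c1 : Q × List Γ} {a : VSym I C R}
    {c2 : Q × List Γ} (h : VPA.Step B c1 a c2) :
    VPA.Step B (c1.1, c1.2 ++ σ) a (c2.1, c2.2 ++ σ) := by
  cases h with
  | int h => exact .int h
  | call h => exact .call h
  | ret h => exact .ret h

lemma vpaLift {B : VPA I C R Γ Q} (σ : List Γ) : ∀ {c1 : Q × List Γ} {w : List (VSym I C R)}
    {c2 : Q × List Γ}, VPA.Run B c1 w c2 →
    VPA.Run B (c1.1, c1.2 ++ σ) w (c2.1, c2.2 ++ σ)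
  | _, _, _, .nil _ => .nil _
  | _, _, _, .cons hs h => .cons (vpaLiftStep σ hs) (vpaLift σ h)

/-- Decomposition: a VPA run from a nonempty stack down to the empty stack must at
some point pop the top symbol for the first time. -/
lemma vpaPop {B : VPA I C R Γ Q} : ∀ n (w : List (VSym I C R)), w.length ≤ n →
    ∀ q γ σ qf, VPA.Run B (q, γ :: σ) w (qf, []) →
    ∃ w₁ r w₂ q₂ q₃, w = w₁ ++ VSym.ret r :: w₂ ∧ VPA.Run B (q, []) w₁ (q₂, []) ∧
      B.retTrans q₂ r γ q₃ ∧ VPA.Run B (q₃, σ) w₂ (qf, []) := by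
  intro n
  induction n with
  | zero =>
    intro w hw q γ σ qf hrun
    cases hrun with
    | cons hs hrest => simp at hw
  | succ n ih =>
    intro w hw q γ σ qf hrun
    cases hrun with
    | cons hs hrest =>
      rename_i a w'
      cases hs with
      | int h =>
        obtain ⟨w₁, r, w₂, q₂, q₃, hw', h1, h2, h3⟩ :=
          ih w' (by simp at hw; omega) _ _ _ _ hrest
        exact ⟨VSym.int _ :: w₁, r, w₂, q₂, q₃, by simp [hw'],
          .cons (.int h) h1, h2, h3⟩
      | call h =>
        rename_i q₁' cc γ'
        obtain ⟨w₁, r', w₂, q₂, q₃, hw', h1, h2, h3⟩ :=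
          ih w' (by simp at hw; omega) _ _ _ _ hrest
        obtain ⟨w₁', r'', w₂', q₄, q₅, hw'', h1', h2', h3'⟩ :=
          ih w₂ (by subst hw'; simp [List.length_append] at hw; omega) _ _ _ _ h3
        refine ⟨VSym.call cc :: w₁ ++ VSym.ret r' :: w₁', r'', w₂', q₄, q₅,
          by simp [hw', hw''], ?_, h2', h3'⟩
        exact .cons (.call h)
          (vpaRunAppend (vpaLift [_] h1) (.cons (.ret h2) h1'))
      | ret h =>
        exact ⟨[], _, w', q, _, rfl, .nil _, h, hrest⟩

/-! ### From VRA to VPA -/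

/-- The VPA simulating a VRA: same states, stack alphabet = the states. -/
def vraToVPA (A : VRA I C R P Q) : VPA I C R Q Q where
  init q := A.comp q = none ∧ A.init q
  final q := A.comp q = none ∧ A.final q
  intTrans := A.intTrans
  callTrans q c q' γ :=
    ∃ J, A.procTrans q J γ ∧ (A.link J).1 = c ∧ A.comp q' = some J ∧ A.init q'
  retTrans q r γ q' := γ = q' ∧ ∃ J, A.comp q = some J ∧ A.final q ∧ (A.link J).2 = r

lemma vraToVPA_run_fwd {A : VRA I C R P Q} : ∀ {c1 : Q × List Q} {w : List (VSym I C R)}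
    {c2 : Q × List Q}, VRA.Run A c1 w c2 → VPA.Run (vraToVPA A) c1 w c2 := by
  intro c1 w c2 h
  induction h with
  | nil => exact .nil _
  | cons hs _ ih =>
    refine .cons ?_ ih
    cases hs with
    | int h => exact .int h
    | call h1 h2 h3 h4 => exact .call ⟨_, h1, h2, h3, h4⟩
    | ret h1 h2 h3 => exact .ret ⟨rfl, _, h1, h2, h3⟩

lemma vraToVPA_run_bwd {A : VRA I C R P Q} : ∀ {c1 : Q × List Q} {w : List (VSym I C R)}
    {c2 : Q × List Q}, VPA.Run (vraToVPA A) c1 w c2 → VRA.Run A c1 w c2 := by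
  intro c1 w c2 h
  induction h with
  | nil => exact .nil _
  | cons hs _ ih =>
    refine .cons ?_ ih
    cases hs with
    | int h => exact .int h
    | call h => obtain ⟨J, h1, h2, h3, h4⟩ := h; exact .call h1 h2 h3 h4
    | ret h =>
      obtain ⟨heq, J, h1, h2, h3⟩ := h
      subst heq
      exact .ret h1 h2 h3

lemma vraToVPA_lang (A : VRA I C R P Q) : (vraToVPA A).Lang = A.Lang := by
  ext w
  constructor
  · rintro ⟨qi, qf, ⟨hci, hi⟩, ⟨hcf, hf⟩, hrun⟩
    exact ⟨qi, qf, hci, hi, hcf, hf, vraToVPA_run_bwd hrun⟩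
  · rintro ⟨qi, qf, hci, hi, hcf, hf, hrun⟩
    exact ⟨qi, qf, ⟨hci, hi⟩, ⟨hcf, hf⟩, vraToVPA_run_fwd hrun⟩

/-! ### From VPA to VRA -/

/-- The VRA simulating a VPA.  A procedural symbol `(c, q₁, γ, r, q₂)` stands for a
call on `c` entering state `q₁` and pushing `γ`, whose matching return reads `r`,
pops `γ` and lands in `q₂`.  States are tagged with their component. -/
def vpaToVRA (B : VPA I C R Γ Q) :
    VRA I C R (C × Q × Γ × R × Q) (Option (C × Q × Γ × R × Q) × Q) where
  link J := (J.1, J.2.2.2.1)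
  comp s := s.1
  init s := match s.1 with
    | none => B.init s.2
    | some J => s.2 = J.2.1
  final s := match s.1 with
    | none => B.final s.2
    | some J => B.retTrans s.2 J.2.2.2.1 J.2.2.1 J.2.2.2.2
  intTrans s a t := t.1 = s.1 ∧ B.intTrans s.2 a t.2
  procTrans s J t := t.1 = s.1 ∧ t.2 = J.2.2.2.2 ∧ B.callTrans s.2 J.1 J.2.1 J.2.2.1
  intTrans_comp := fun _ _ _ h => h.1
  procTrans_comp := fun _ _ _ h => h.1

/-- If the VPA accepts `w` from `q` with empty stack to `qf` with empty stack, then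
in any component `K` with any stack `σ`, the constructed VRA can read `w` from
`(K, q)` to `(K, qf)`. -/
lemma vpaToVRA_run {B : VPA I C R Γ Q} : ∀ n (w : List (VSym I C R)), w.length ≤ n →
    ∀ q qf, VPA.Run B (q, []) w (qf, []) →
    ∀ K σ, VRA.Run (vpaToVRA B) ((K, q), σ) w ((K, qf), σ) := by
  intro n
  induction n with
  | zero =>
    intro w hw q qf hrun K σ
    cases hrun with
    | nil => exact .nil _
    | cons hs hrest => simp at hw
  | succ n ih =>
    intro w hw q qf hrun K σ
    cases hrun with
    | nil => exact .nil _
    | cons hs hrest =>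
      rename_i a w'
      cases hs with
      | int h =>
        refine .cons (VRA.Step.int ?_) (ih w' (by simp at hw; omega) _ _ hrest K σ)
        exact ⟨rfl, h⟩
      | call h =>
        rename_i q₁ c γ
        obtain ⟨w₁, r, w₂, q₂, q₃, hw', h1, h2, h3⟩ :=
          vpaPop n w' (by simp at hw; omega) _ _ _ _ hrest
        have hl₁ : w₁.length ≤ n := by
          subst hw'; simp [List.length_append] at hw; omega
        have hl₂ : w₂.length ≤ n := by
          subst hw'; simp [List.length_append] at hw; omega
        have run1 := ih w₁ hl₁ _ _ h1 (some (c, q₁, γ, r, q₃)) ((K, q₃) :: σ)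
        have run2 := ih w₂ hl₂ _ _ h3 K σ
        subst hw'
        exact .cons
          (VRA.Step.call (J := (c, q₁, γ, r, q₃)) (q' := (some (c, q₁, γ, r, q₃), q₁))
            (p := (K, q₃)) ⟨rfl, rfl, h⟩ rfl rfl rfl)
          (vraRunAppend run1
            (.cons (VRA.Step.ret (J := (c, q₁, γ, r, q₃)) rfl h2 rfl) run2))

/-- The invariant relating a VRA stack (of return states) to a VPA stack. -/
inductive StackInv {C Q Γ R : Type} :
    Option (C × Q × Γ × R × Q) → List (Option (C × Q × Γ × R × Q) × Q) → List Γ → Prop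
  | nil : StackInv none [] []
  | cons {K σ γs} (c : C) (q₁ : Q) (γ : Γ) (r : R) (q₂ : Q) :
      StackInv K σ γs →
      StackInv (some (c, q₁, γ, r, q₂)) ((K, q₂) :: σ) (γ :: γs)

lemma vpaToVRA_step_sim' {B : VPA I C R Γ Q}
    {s s' : (Option (C × Q × Γ × R × Q) × Q) × List (Option (C × Q × Γ × R × Q) × Q)}
    {a : VSym I C R} (h : VRA.Step (vpaToVRA B) s a s') {γs : List Γ}
    (hinv : StackInv s.1.1 s.2 γs) :
    ∃ γs', StackInv s'.1.1 s'.2 γs' ∧ VPA.Step B (s.1.2, γs) a (s'.1.2, γs') := by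
  obtain ⟨⟨K, q⟩, σ⟩ := s
  cases h with
  | int h =>
    rename_i q' aI
    obtain ⟨K', q₁⟩ := q'
    obtain ⟨hK, hint⟩ := h
    have hK' : K' = K := hK
    subst hK'
    exact ⟨γs, hinv, .int hint⟩
  | call hproc hlink hcomp hinit =>
    rename_i q' p J c
    obtain ⟨K', q₁'⟩ := q'
    have hK' : K' = some J := hcomp
    subst hK'
    obtain ⟨c₀, q₁, γ, r, q₂⟩ := J
    have hq : q₁' = q₁ := hinit
    subst hq
    obtain ⟨Kp, pq⟩ := p
    obtain ⟨h1, h2, h3⟩ := hproc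
    have h1' : Kp = K := h1
    have h2' : pq = q₂ := h2
    subst h1'; subst h2'
    have hc : c₀ = c := hlink
    subst hc
    exact ⟨γ :: γs, .cons _ _ _ _ _ hinv, .call h3⟩
  | ret hcomp hfinal hlink =>
    rename_i p σ₀ J r
    have hK : K = some J := hcomp
    subst hK
    obtain ⟨c₀, q₁, γ, r₀, q₂⟩ := J
    have hr : r₀ = r := hlink
    subst hr
    have hfin : B.retTrans q r₀ γ q₂ := hfinal
    obtain ⟨Kp, pq⟩ := p
    cases hinv with
    | cons _ _ _ _ _ hinv' => exact ⟨_, hinv', .ret hfin⟩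

lemma vpaToVRA_run_sim {B : VPA I C R Γ Q} :
    ∀ {s : (Option (C × Q × Γ × R × Q) × Q) × List (Option (C × Q × Γ × R × Q) × Q)}
      {w : List (VSym I C R)} {s'}, VRA.Run (vpaToVRA B) s w s' →
    ∀ {γs : List Γ}, StackInv s.1.1 s.2 γs →
    ∃ γs', StackInv s'.1.1 s'.2 γs' ∧ VPA.Run B (s.1.2, γs) w (s'.1.2, γs') := by
  intro s w s' hrun
  induction hrun with
  | nil => exact fun h => ⟨_, h, .nil _⟩
  | cons hs _ ih =>
    intro γs h
    obtain ⟨γs₂, h₂, hstep⟩ := vpaToVRA_step_sim' hs h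
    obtain ⟨γs₃, h₃, hrun'⟩ := ih h₂
    exact ⟨γs₃, h₃, .cons hstep hrun'⟩

lemma vpaToVRA_lang (B : VPA I C R Γ Q) : (vpaToVRA B).Lang = B.Lang := by
  ext w
  constructor
  · rintro ⟨⟨Ki, qi⟩, ⟨Kf, qf⟩, hci, hi, hcf, hf, hrun⟩
    have hKi : Ki = none := hci
    have hKf : Kf = none := hcf
    subst hKi; subst hKf
    obtain ⟨γs', hinv', hrun'⟩ := vpaToVRA_run_sim hrun (γs := []) StackInv.nil
    cases hinv'
    exact ⟨qi, qf, hi, hf, hrun'⟩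
  · rintro ⟨qi, qf, hi, hf, hrun⟩
    exact ⟨(none, qi), (none, qf), rfl, hi, rfl, hf,
      vpaToVRA_run _ w le_rfl _ _ hrun none []⟩

end Equiexpressive

/-- VRAs and VPAs are equi-expressive over well-matched words: a
language of well-matched words is accepted by some (finite) VRA iff it is
accepted by some (finite) VPA. -/
theorem vra_vpa_equiexpressive {I C R : Type} [Finite I] [Finite C] [Finite R]
    (L : Set (List (VSym I C R))) (hL : ∀ w ∈ L, WellMatched w) :
    (∃ (P Q : Type) (_ : Finite P) (_ : Finite Q) (A : VRA I C R P Q), A.Lang = L) ↔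
    (∃ (Γ Q : Type) (_ : Finite Γ) (_ : Finite Q) (B : VPA I C R Γ Q), B.Lang = L) := by
  constructor
  · rintro ⟨P, Q, hP, hQ, A, rfl⟩
    haveI := hP; haveI := hQ
    exact ⟨Q, Q, inferInstance, inferInstance, vraToVPA A, vraToVPA_lang A⟩
  · rintro ⟨Γ, Q, hΓ, hQ, B, rfl⟩
    haveI := hΓ; haveI := hQ
    haveI := Fintype.ofFinite Γ; haveI := Fintype.ofFinite Q
    haveI := Fintype.ofFinite C; haveI := Fintype.ofFinite R
    exact ⟨C × Q × Γ × R × Q, Option (C × Q × Γ × R × Q) × Q, inferInstance,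
      inferInstance, vpaToVRA B, vpaToVRA_lang B⟩
end

section
/- Let A be a VRA such that every component automaton is a complete FA, and suppose that for all c ∈ Σ_call and r ∈ Σ_ret, the regular languages L_reg(A^J) over Σ_int ∪ Σ_proc, for J with f(J) = ⟨c, r⟩, form a partition of (Σ_int ∪ Σ_proc)^*. Then A is codeterministic and complete. -/
section Aux

namespace VRA

variable {I C R P Q : Type}

theorem run_append {A : VRA I C R P Q} {cfg₁ cfg₂ : Q × List Q} {w₁ : List (VSym I C R)}
    (h₁ : Run A cfg₁ w₁ cfg₂) :
    ∀ {cfg₃ w₂}, Run A cfg₂ w₂ cfg₃ → Run A cfg₁ (w₁ ++ w₂) cfg₃ := by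
  induction h₁ with
  | nil => intro _ _ h; exact h
  | cons s _ ih => intro _ _ h; exact .cons s (ih h)

theorem run_split {A : VRA I C R P Q} {w₁ : List (VSym I C R)} :
    ∀ {cfg₁ cfg₃ : Q × List Q} {w₂}, Run A cfg₁ (w₁ ++ w₂) cfg₃ →
      ∃ cfg₂, Run A cfg₁ w₁ cfg₂ ∧ Run A cfg₂ w₂ cfg₃ := by
  induction w₁ with
  | nil => intro cfg₁ _ _ h; exact ⟨cfg₁, .nil _, h⟩
  | cons a w₁ ih =>
    intro cfg₁ _ _ h
    cases h with
    | cons s hr =>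
      obtain ⟨cfg₂, hA, hB⟩ := ih hr
      exact ⟨cfg₂, .cons s hA, hB⟩

theorem regRun_comp {A : VRA I C R P Q} {q q' : Q} {u : List (I ⊕ P)}
    (h : RegRun A q u q') : A.comp q' = A.comp q := by
  induction h with
  | nil => rfl
  | int t _ ih => exact ih.trans (A.intTrans_comp t)
  | proc t _ ih => exact ih.trans (A.procTrans_comp t)

theorem wm_nil : WellMatched ([] : List (VSym I C R)) := WellMatched.internal []

theorem wm_cons_int {w : List (VSym I C R)} (a : I) (h : WellMatched w) :
    WellMatched (VSym.int a :: w) := WellMatched.concat (WellMatched.internal [a]) h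

/-- `MTo n w` : `w` is a concatenation of `n` well-matched blocks each followed by
an unmatched return, then a final well-matched block. -/
inductive MTo {I C R : Type} : ℕ → List (VSym I C R) → Prop
  | base {w} : WellMatched w → MTo 0 w
  | step {w₁ w₂ : List (VSym I C R)} {n : ℕ} (r : R) :
      WellMatched w₁ → MTo n w₂ → MTo (n + 1) (w₁ ++ VSym.ret r :: w₂)

theorem mto_cons_int {n : ℕ} {w : List (VSym I C R)} (a : I) (h : MTo n w) :
    MTo n (VSym.int a :: w) := by
  cases h with
  | base h => exact .base (wm_cons_int a h)
  | step r h₁ h₂ => exact .step r (wm_cons_int a h₁) h₂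

theorem mto_wm_append {n : ℕ} {b w : List (VSym I C R)} (hb : WellMatched b)
    (h : MTo n w) : MTo n (b ++ w) := by
  cases h with
  | base h => exact .base (hb.concat h)
  | step r h₁ h₂ =>
    rw [← List.append_assoc]
    exact .step r (hb.concat h₁) h₂

theorem mto_ret {n : ℕ} {w : List (VSym I C R)} (r : R) (h : MTo n w) :
    MTo (n + 1) (VSym.ret r :: w) := MTo.step r wm_nil h

theorem run_mto {A : VRA I C R P Q} {cfg cfg' : Q × List Q} {w : List (VSym I C R)}
    (h : Run A cfg w cfg') (h' : cfg'.2 = []) : MTo cfg.2.length w := by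
  induction h with
  | nil => rw [h']; exact .base wm_nil
  | cons s _ ih =>
    cases s with
    | int t => exact mto_cons_int _ (ih h')
    | @call _ q₁ p σ J c t hc hcomp hinit =>
      cases ih h' with
      | @step w₁ w₂ n r hw₁ h₂ =>
        have heq : VSym.call c :: (w₁ ++ VSym.ret r :: w₂) =
            (VSym.call c :: w₁ ++ [VSym.ret r]) ++ w₂ := by simp
        rw [heq]
        exact mto_wm_append (WellMatched.bracket c r hw₁) h₂
    | ret hcm hfm hr => exact mto_ret _ (ih h')

theorem wm_of_run {A : VRA I C R P Q} {q q' : Q} {w : List (VSym I C R)}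
    (h : Run A (q, []) w (q', [])) : WellMatched w := by
  have := run_mto h rfl
  cases this with
  | base h => exact h

/-- Flattening of a well-matched word relative to `A`: each bracketed block
`⟨c w' r⟩` is replaced by the procedural symbol of a component linked to `⟨c,r⟩`
whose regular language contains the flattening of `w'`. -/
inductive Flat (A : VRA I C R P Q) : List (VSym I C R) → List (I ⊕ P) → Prop
  | nil : Flat A [] []
  | int {w u} (a : I) : Flat A w u → Flat A (VSym.int a :: w) (Sum.inl a :: u)
  | brk {w' w : List (VSym I C R)} {u' u : List (I ⊕ P)} {J : P} {c : C} {r : R} :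
      Flat A w' u' → A.link J = (c, r) → u' ∈ A.RegLang (some J) → Flat A w u →
      Flat A (VSym.call c :: w' ++ VSym.ret r :: w) (Sum.inr J :: u)

theorem flat_append {A : VRA I C R P Q} {w₁ : List (VSym I C R)} {u₁ : List (I ⊕ P)}
    (h₁ : Flat A w₁ u₁) :
    ∀ {w₂ u₂}, Flat A w₂ u₂ → Flat A (w₁ ++ w₂) (u₁ ++ u₂) := by
  induction h₁ with
  | nil => intro _ _ h; exact h
  | int a _ ih => intro _ _ h; exact .int a (ih h)
  | brk hf' hJ hu' _ _ ih =>
    intro _ _ h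
    have := Flat.brk hf' hJ hu' (ih h)
    simpa [List.append_assoc] using this

theorem flat_exists {A : VRA I C R P Q}
    (hcover : ∀ (c : C) (r : R),
      (⋃ J ∈ {J : P | A.link J = (c, r)}, A.RegLang (some J)) = Set.univ)
    {w : List (VSym I C R)} (hw : WellMatched w) : ∃ u, Flat A w u := by
  induction hw with
  | internal v =>
    refine ⟨v.map Sum.inl, ?_⟩
    induction v with
    | nil => exact .nil
    | cons a v ih => exact .int a ih
  | bracket c r _ ih =>
    obtain ⟨u', hf⟩ := ih
    have hmem : u' ∈ (⋃ J ∈ {J : P | A.link J = (c, r)}, A.RegLang (some J)) := by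
      rw [hcover]; trivial
    simp only [Set.mem_iUnion, Set.mem_setOf_eq] at hmem
    obtain ⟨J, hJ, hu'⟩ := hmem
    exact ⟨[Sum.inr J], .brk hf hJ hu' .nil⟩
  | concat _ _ ih₁ ih₂ =>
    obtain ⟨u₁, h₁⟩ := ih₁
    obtain ⟨u₂, h₂⟩ := ih₂
    exact ⟨u₁ ++ u₂, flat_append h₁ h₂⟩

theorem run_of_flat {A : VRA I C R P Q} {w : List (VSym I C R)} {u : List (I ⊕ P)}
    (hf : Flat A w u) :
    ∀ {q q' : Q} (σ : List Q), RegRun A q u q' → Run A (q, σ) w (q', σ) := by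
  induction hf with
  | nil => intro q q' σ h; cases h; exact .nil _
  | int a _ ih =>
    intro q q' σ h
    cases h with
    | int t hr => exact .cons (.int t) (ih σ hr)
  | brk hf' hJ hu' hfw ih' ih =>
    intro q q' σ h
    cases h with
    | proc t hr =>
      rename_i p
      obtain ⟨qi, qf, hci, hii, hcf, hff, hrr⟩ := hu'
      refine .cons (.call t (by rw [hJ]) hci hii) ?_
      exact run_append (ih' (p :: σ) hrr) (.cons (.ret hcf hff (by rw [hJ])) (ih σ hr))

theorem flat_run_reg {A : VRA I C R P Q}
    (hdisj : ∀ (c : C) (r : R) (J J' : P), A.link J = (c, r) → A.link J' = (c, r) →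
      J ≠ J' → A.RegLang (some J) ∩ A.RegLang (some J') = ∅)
    {w : List (VSym I C R)} {u : List (I ⊕ P)} (hf : Flat A w u) :
    ∀ {q q'' : Q} {σ σ'' : List Q}, Run A (q, σ) w (q'', σ'') →
      σ'' = σ ∧ RegRun A q u q'' := by
  induction hf with
  | nil =>
    intro q q'' σ σ'' h
    cases h
    exact ⟨rfl, .nil _⟩
  | int a _ ih =>
    intro q q'' σ σ'' h
    cases h with
    | cons s hr =>
      cases s with
      | int t =>
        obtain ⟨h1, h2⟩ := ih hr
        exact ⟨h1, .int t h2⟩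
  | @brk w' w2 u' u2 J c r hf' hJ hu' hfw ih' ih =>
    intro q q'' σ σ'' h
    cases h with
    | cons s hrest =>
      cases s with
      | @call _ q₁ p _ J₀ _ t hc hcomp hinit =>
        obtain ⟨⟨qm, σm⟩, h₁, h₂⟩ := run_split hrest
        obtain ⟨hσm, hreg'⟩ := ih' h₁
        subst hσm
        cases h₂ with
        | cons s₂ hrest₂ =>
          cases s₂ with
          | @ret _ _ _ J₁ _ hcm hfm hrJ =>
            obtain ⟨hσ, hreg⟩ := ih hrest₂
            refine ⟨hσ, ?_⟩
            have hcompm : A.comp qm = some J₀ := by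
              rw [regRun_comp hreg', hcomp]
            have hJ₁ : J₁ = J₀ := by
              have := hcm.symm.trans hcompm
              exact Option.some_injective _ this
            subst hJ₁
            have hlink : A.link J₁ = (c, r) := by
              ext
              · exact hc
              · exact hrJ
            have hu'' : u' ∈ A.RegLang (some J₁) :=
              ⟨q₁, qm, hcomp, hinit, hcompm, hfm, hreg'⟩
            by_cases hJJ : J₁ = J
            · subst hJJ
              exact .proc t hreg
            · exfalso
              have hempty := hdisj c r J₁ J hlink hJ hJJ
              have : u' ∈ A.RegLang (some J₁) ∩ A.RegLang (some J) := ⟨hu'', hu'⟩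
              rw [hempty] at this
              exact this

end VRA

end Aux

/-- if all component automata of a VRA are complete FAs and, for each
call/return pair `⟨c,r⟩`, the regular languages of the components linked to
`⟨c,r⟩` partition `(Σ_int ∪ Σ_proc)^*`, then the VRA is codeterministic and
complete. -/
theorem VRA.codet_complete_of_regLang_partition {I C R P Q : Type}
    (A : VRA I C R P Q)
    (hcInt : ∀ (q : Q) (a : I), ∃ p, A.intTrans q a p)
    (hcProc : ∀ (q : Q) (J : P), ∃ p, A.procTrans q J p)
    (hdisj : ∀ (c : C) (r : R) (J J' : P), A.link J = (c, r) → A.link J' = (c, r) →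
      J ≠ J' → A.RegLang (some J) ∩ A.RegLang (some J') = ∅)
    (hcover : ∀ (c : C) (r : R),
      (⋃ J ∈ {J : P | A.link J = (c, r)}, A.RegLang (some J)) = Set.univ) :
    A.Codeterministic ∧ A.Complete := by
  constructor
  · -- codeterministic
    intro J J' hne hlink
    ext w
    simp only [Set.mem_inter_iff, Set.mem_empty_iff_false, iff_false, not_and]
    rintro ⟨qi, qf, hci, hii, hcf, hff, hrun⟩ ⟨qi', qf', hci', hii', hcf', hff', hrun'⟩
    have hwm : WellMatched w := wm_of_run hrun
    obtain ⟨u, hfu⟩ := flat_exists hcover hwm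
    have h1 : u ∈ A.RegLang (some J) :=
      ⟨qi, qf, hci, hii, hcf, hff, (flat_run_reg hdisj hfu hrun).2⟩
    have h2 : u ∈ A.RegLang (some J') :=
      ⟨qi', qf', hci', hii', hcf', hff', (flat_run_reg hdisj hfu hrun').2⟩
    have hempty := hdisj (A.link J).1 (A.link J).2 J J' rfl (by rw [← hlink]) hne
    have : u ∈ A.RegLang (some J) ∩ A.RegLang (some J') := ⟨h1, h2⟩
    rw [hempty] at this
    exact this
  · refine ⟨hcInt, hcProc, ?_⟩
    intro c r
    ext w
    simp only [Set.mem_iUnion, Set.mem_setOf_eq]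
    constructor
    · rintro ⟨J, hJ, qi, qf, hci, hii, hcf, hff, hrun⟩
      exact wm_of_run hrun
    · intro hwm
      obtain ⟨u, hfu⟩ := flat_exists hcover hwm
      have hmem : u ∈ (⋃ J ∈ {J : P | A.link J = (c, r)}, A.RegLang (some J)) := by
        rw [hcover]; trivial
      simp only [Set.mem_iUnion, Set.mem_setOf_eq] at hmem
      obtain ⟨J, hJ, qi, qf, hci, hii, hcf, hff, hrr⟩ := hmem
      exact ⟨J, hJ, qi, qf, hci, hii, hcf, hff, run_of_flat hfu [] hrr⟩
end

section
/- Let A be a VRA such that for all c ∈ Σ_call, r ∈ Σ_ret, and all distinct J, J' ∈ Σ_proc^⟨c,r⟩, the regular languages satisfy L_reg(A^J) ∩ L_reg(A^{J'}) = ∅. Then the recursive languages are also pairwise disjoint: for all distinct J, J' ∈ Σ_proc^⟨c,r⟩, L(A^J) ∩ L(A^{J'}) = ∅. -/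
namespace VRA

variable {I C R P Q : Type} {A : VRA I C R P Q}

/-- A run over a concatenation splits at an intermediate configuration. -/
lemma run_append_split : ∀ {w₁ w₂ : List (VSym I C R)} {cfg cfg' : Q × List Q},
    Run A cfg (w₁ ++ w₂) cfg' → ∃ cfgm, Run A cfg w₁ cfgm ∧ Run A cfgm w₂ cfg' := by
  intro w₁
  induction w₁ with
  | nil => exact fun h => ⟨_, Run.nil _, h⟩
  | cons a t ih =>
    intro w₂ cfg cfg' h
    cases h with
    | cons hs hr =>
      obtain ⟨m, h1, h2⟩ := ih hr
      exact ⟨m, Run.cons hs h1, h2⟩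

/-- Stack-height bookkeeping: calls push, returns pop. -/
lemma run_count : ∀ {cfg cfg' : Q × List Q} {w : List (VSym I C R)}, Run A cfg w cfg' →
    cfg.2.length + w.countP VSym.isCall = cfg'.2.length + w.countP VSym.isRet := by
  intro cfg cfg' w h
  induction h with
  | nil => rfl
  | cons hs _ ih =>
    cases hs with
    | int h =>
      simp [List.countP_cons, VSym.isCall, VSym.isRet] at ih ⊢
      omega
    | call h =>
      simp [List.countP_cons, VSym.isCall, VSym.isRet] at ih ⊢
      omega
    | ret h =>
      simp [List.countP_cons, VSym.isCall, VSym.isRet] at ih ⊢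
      omega

/-- A run that starts with a nonempty stack and ends with an empty stack splits at
the return step popping the bottom stack symbol. -/
lemma run_split_s10 : ∀ {cfg cfg' : Q × List Q} {w : List (VSym I C R)},
    Run A cfg w cfg' → ∀ q σ p₀ pf, cfg = (q, σ ++ [p₀]) → cfg' = (pf, ([] : List Q)) →
    ∃ w₁ r w₂ qf K, w = w₁ ++ VSym.ret r :: w₂ ∧
      Run A (q, σ) w₁ (qf, []) ∧ A.final qf ∧ A.comp qf = some K ∧ (A.link K).2 = r ∧
      Run A (p₀, []) w₂ (pf, []) := by
  intro cfg cfg' w h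
  induction h with
  | nil cfg =>
    intro q σ p₀ pf h1 h2
    rw [h2] at h1
    simp at h1
  | cons hs hr ih =>
    intro q σ p₀ pf h1 h2
    subst h2
    cases hs with
    | int ht =>
      injection h1 with hq hσ
      subst hq; subst hσ
      obtain ⟨w₁, r, w₂, qf, K, heq, hrun1, hf, hK, hKr, hrun2⟩ := ih _ σ p₀ pf rfl rfl
      exact ⟨VSym.int _ :: w₁, r, w₂, qf, K, by simp [heq],
        Run.cons (Step.int ht) hrun1, hf, hK, hKr, hrun2⟩
    | @call _ q' p' _ J c hpt hc hcm hin =>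
      injection h1 with hq hσ
      subst hq; subst hσ
      obtain ⟨w₁, r, w₂, qf, K, heq, hrun1, hf, hK, hKr, hrun2⟩ :=
        ih q' (p' :: σ) p₀ pf rfl rfl
      exact ⟨VSym.call c :: w₁, r, w₂, qf, K, by simp [heq],
        Run.cons (Step.call hpt hc hcm hin) hrun1, hf, hK, hKr, hrun2⟩
    | @ret qq pp σσ K r hK hfin hlr =>
      injection h1 with hq hσ
      subst hq
      cases σ with
      | nil =>
        simp only [List.nil_append] at hσ
        injection hσ with h3 h4
        subst h3; subst h4
        exact ⟨[], r, _, _, K, rfl, Run.nil _, hfin, hK, hlr, hr⟩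
      | cons ps σ' =>
        simp only [List.cons_append] at hσ
        injection hσ with h3 h4
        subst h3; subst h4
        obtain ⟨w₁, r', w₂, qf, K', heq, hrun1, hf, hK', hKr, hrun2⟩ :=
          ih pp σ' p₀ pf rfl rfl
        exact ⟨VSym.ret r :: w₁, r', w₂, qf, K', by simp [heq],
          Run.cons (Step.ret hK hfin hlr) hrun1, hf, hK', hKr, hrun2⟩

/-- A run from empty stack to empty stack stays in the same component. -/
lemma run_comp : ∀ (n : ℕ) {w : List (VSym I C R)}, w.length ≤ n → ∀ {q p : Q},
    Run A (q, []) w (p, []) → A.comp p = A.comp q := by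
  intro n
  induction n with
  | zero =>
    intro w hw q p h
    rw [List.length_eq_zero_iff.mp (Nat.le_zero.mp hw)] at h
    cases h; rfl
  | succ n ih =>
    intro w hw q p h
    cases h with
    | nil => rfl
    | cons hs hr =>
      cases hs with
      | int ht =>
        simp only [List.length_cons] at hw
        rw [ih (by omega) hr]
        exact A.intTrans_comp ht
      | call hpt hc hcm hin =>
        obtain ⟨w₁, r, w₂, qf, K, heq, hrun1, hf, hK, hKr, hrun2⟩ :=
          run_split_s10 hr _ [] _ _ rfl rfl
        have hlen : w₂.length ≤ n := by
          rw [heq] at hw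
          simp only [List.length_cons, List.length_append] at hw
          omega
        rw [ih hlen hrun2]
        exact A.procTrans_comp hpt

/-- Uniqueness of the split point: the first unmatched return is determined by the
word, given both prefixes are empty-stack-to-empty-stack runnable. -/
lemma split_unique {w₁ w₁' w₂ w₂' : List (VSym I C R)} {r r' : R}
    (h : w₁ ++ VSym.ret r :: w₂ = w₁' ++ VSym.ret r' :: w₂')
    {q1 qf1 q2 qf2 : Q}
    (h1 : Run A (q1, []) w₁ (qf1, []))
    (h2 : Run A (q2, []) w₁' (qf2, [])) :
    w₁ = w₁' ∧ r = r' ∧ w₂ = w₂' := by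
  have key : ∀ {u u' : List (VSym I C R)} {s s' : R} {v v' : List (VSym I C R)}
      {x xf y yf : Q}, u ++ VSym.ret s :: v = u' ++ VSym.ret s' :: v' →
      Run A (x, []) u (xf, []) → Run A (y, []) u' (yf, []) →
      u.length ≤ u'.length → u = u' := by
    intro u u' s s' v v' x xf y yf heq hu hu' hlen
    rcases List.append_eq_append_iff.mp heq with ⟨t, ht1, ht2⟩ | ⟨t, ht1, ht2⟩
    · cases t with
      | nil => simpa using ht1.symm
      | cons a t' =>
        exfalso
        cases ht2
        -- u' = u ++ ret s :: t'
        rw [ht1] at hu'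
        obtain ⟨cfgm, hpre, hpost⟩ := run_append_split hu'
        have hc1 := run_count hu
        have hc2 := run_count hpre
        simp at hc1 hc2
        have : cfgm.2.length = 0 := by omega
        obtain ⟨qm, σm⟩ := cfgm
        simp at this
        subst this
        cases hpost with
        | cons hs _ => cases hs
    · cases t with
      | nil => simpa using ht1
      | cons a t' =>
        exfalso
        cases ht2
        -- u = u' ++ ret s' :: t', so u'.length < u.length, contradict hlen
        rw [ht1] at hlen
        simp only [List.length_append, List.length_cons] at hlen
        omega
  have huu : w₁ = w₁' := by
    rcases Nat.le_total w₁.length w₁'.length with hle | hle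
    · exact key h h1 h2 hle
    · exact (key h.symm h2 h1 hle).symm
  subst huu
  have := List.append_cancel_left h
  exact ⟨rfl, (VSym.ret.injEq _ _).mp (List.head_eq_of_cons_eq this),
    List.tail_eq_of_cons_eq this⟩

lemma step_int_inv {q : Q} {σ : List Q} {a : I} {cfg₂ : Q × List Q}
    (h : Step A (q, σ) (VSym.int a) cfg₂) :
    ∃ q', A.intTrans q a q' ∧ cfg₂ = (q', σ) := by
  cases h with | int ht => exact ⟨_, ht, rfl⟩

lemma step_call_inv {q : Q} {σ : List Q} {c : C} {cfg₂ : Q × List Q}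
    (h : Step A (q, σ) (VSym.call c) cfg₂) :
    ∃ J p e, A.procTrans q J p ∧ (A.link J).1 = c ∧ A.comp e = some J ∧ A.init e ∧
      cfg₂ = (e, p :: σ) := by
  cases h with | call hpt hc hcm hin => exact ⟨_, _, _, hpt, hc, hcm, hin, rfl⟩

lemma step_ret_empty {q : Q} {r : R} {cfg₂ : Q × List Q}
    (h : Step A (q, ([] : List Q)) (VSym.ret r) cfg₂) : False := by
  cases h

/-- Two recursive runs over the same word flatten to a common regular word,
provided components linked to the same pair have disjoint regular languages. -/
lemma pair_flatten
    (hdisj : ∀ (c : C) (r : R) (J J' : P), A.link J = (c, r) → A.link J' = (c, r) →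
      J ≠ J' → A.RegLang (some J) ∩ A.RegLang (some J') = ∅) :
    ∀ (n : ℕ) (w : List (VSym I C R)), w.length ≤ n →
    ∀ q1 p1 q2 p2 : Q, Run A (q1, []) w (p1, []) → Run A (q2, []) w (p2, []) →
    ∃ v : List (I ⊕ P), RegRun A q1 v p1 ∧ RegRun A q2 v p2 := by
  intro n
  induction n with
  | zero =>
    intro w hw q1 p1 q2 p2 h1 h2
    rw [List.length_eq_zero_iff.mp (Nat.le_zero.mp hw)] at h1 h2
    cases h1; cases h2
    exact ⟨[], RegRun.nil _, RegRun.nil _⟩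
  | succ n ih =>
    intro w hw q1 p1 q2 p2 h1 h2
    cases w with
    | nil =>
      cases h1; cases h2
      exact ⟨[], RegRun.nil _, RegRun.nil _⟩
    | cons a w' =>
      simp only [List.length_cons] at hw
      cases h1 with
      | cons hs1 hr1 =>
        cases h2 with
        | cons hs2 hr2 =>
          cases a with
          | int i =>
            obtain ⟨q1', ht1, rfl⟩ := step_int_inv hs1
            obtain ⟨q2', ht2, rfl⟩ := step_int_inv hs2
            obtain ⟨v, hv1, hv2⟩ := ih w' (by omega) _ _ _ _ hr1 hr2
            exact ⟨Sum.inl i :: v, RegRun.int ht1 hv1, RegRun.int ht2 hv2⟩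
          | call c =>
            obtain ⟨J1, s1, e1, hpt1, hc1, hcm1, hin1, rfl⟩ := step_call_inv hs1
            obtain ⟨J2, s2, e2, hpt2, hc2, hcm2, hin2, rfl⟩ := step_call_inv hs2
            obtain ⟨w₁, r₁, w₂, qf1, K1, heq1, hb1, hf1, hK1, hKr1, hc1'⟩ :=
              run_split_s10 hr1 e1 [] s1 p1 rfl rfl
            obtain ⟨w₁', r₂, w₂', qf2, K2, heq2, hb2, hf2, hK2, hKr2, hc2'⟩ :=
              run_split_s10 hr2 e2 [] s2 p2 rfl rfl
            obtain ⟨hww, hrr, hvv⟩ := split_unique (heq1.symm.trans heq2) hb1 hb2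
            subst hww; subst hrr; subst hvv
            -- component facts
            have hcomp1 : A.comp qf1 = some J1 :=
              (run_comp w₁.length le_rfl hb1).trans hcm1
            have hcomp2 : A.comp qf2 = some J2 :=
              (run_comp w₁.length le_rfl hb2).trans hcm2
            have hKJ1 : K1 = J1 := Option.some.inj (hK1.symm.trans hcomp1)
            have hKJ2 : K2 = J2 := Option.some.inj (hK2.symm.trans hcomp2)
            rw [hKJ1] at hKr1
            rw [hKJ2] at hKr2
            -- lengths
            rw [heq1] at hw
            simp only [List.length_append, List.length_cons] at hw
            -- the two linked components are equal
            have hJJ : J1 = J2 := by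
              by_contra hne
              obtain ⟨v', hv1', hv2'⟩ := ih w₁ (by omega) _ _ _ _ hb1 hb2
              have hmem : v' ∈ A.RegLang (some J1) ∩ A.RegLang (some J2) :=
                ⟨⟨e1, qf1, hcm1, hin1, hcomp1, hf1, hv1'⟩,
                 ⟨e2, qf2, hcm2, hin2, hcomp2, hf2, hv2'⟩⟩
              rw [hdisj (A.link J1).1 (A.link J1).2 J1 J2 rfl
                (Prod.ext (hc2.trans hc1.symm) (hKr2.trans hKr1.symm)) hne] at hmem
              exact hmem
            subst hJJ
            obtain ⟨v'', hv1'', hv2''⟩ := ih w₂ (by omega) _ _ _ _ hc1' hc2'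
            exact ⟨Sum.inr J1 :: v'', RegRun.proc hpt1 hv1'', RegRun.proc hpt2 hv2''⟩
          | ret r =>
            exact absurd hs1 (fun h => step_ret_empty h)

end VRA

/-- if the regular languages of components linked to the same
call/return pair are pairwise disjoint, then so are their recursive languages. -/
theorem VRA.recLang_disjoint_of_regLang_disjoint {I C R P Q : Type}
    (A : VRA I C R P Q)
    (hdisj : ∀ (c : C) (r : R) (J J' : P), A.link J = (c, r) → A.link J' = (c, r) →
      J ≠ J' → A.RegLang (some J) ∩ A.RegLang (some J') = ∅) :
    ∀ (c : C) (r : R) (J J' : P), A.link J = (c, r) → A.link J' = (c, r) →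
      J ≠ J' → A.RecLang (some J) ∩ A.RecLang (some J') = ∅ := by
  intro c r J J' hJ hJ' hne
  rw [Set.eq_empty_iff_forall_notMem]
  rintro w ⟨⟨qi, qf, hc1, hi1, hc2, hf1, hrun1⟩, ⟨qi', qf', hc1', hi1', hc2', hf1', hrun2⟩⟩
  obtain ⟨v, hv1, hv2⟩ := pair_flatten hdisj w.length w le_rfl _ _ _ _ hrun1 hrun2
  have hmem : v ∈ A.RegLang (some J) ∩ A.RegLang (some J') :=
    ⟨⟨qi, qf, hc1, hi1, hc2, hf1, hv1⟩, ⟨qi', qf', hc1', hi1', hc2', hf1', hv2⟩⟩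
  rw [hdisj c r J J' hJ hJ' hne] at hmem
  exact hmem
end

section
/- Let A be a VRA such that for all c ∈ Σ_call and r ∈ Σ_ret, the union of the regular languages ⋃_{J ∈ Σ_proc^⟨c,r⟩} L_reg(A^J) equals (Σ_int ∪ Σ_proc)^*. Then for all c, r, the union of the recursive languages ⋃_{J ∈ Σ_proc^⟨c,r⟩} L(A^J) equals WM(Σ̂). -/
/-- Auxiliary: a word decomposes as `v₀ (ret r₁) v₁ ⋯ (ret rₖ) vₖ` with each `vᵢ`
well-matched. -/
inductive Decomp {I C R : Type} : ℕ → List (VSym I C R) → Prop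
  | zero {w : List (VSym I C R)} : WellMatched w → Decomp 0 w
  | succ {k : ℕ} {v w : List (VSym I C R)} (r : R) :
      WellMatched v → Decomp k w → Decomp (k + 1) (v ++ VSym.ret r :: w)

lemma Decomp.prepend {I C R : Type} {k : ℕ} {v w : List (VSym I C R)}
    (hv : WellMatched v) (h : Decomp k w) : Decomp k (v ++ w) := by
  cases h with
  | zero hw => exact .zero (hv.concat hw)
  | succ r hv' hw =>
    rw [← List.append_assoc]
    exact .succ r (hv.concat hv') hw

namespace VRA

variable {I C R P Q : Type}

lemma Run.append_s11 {A : VRA I C R P Q} {c1 c2 c3 : Q × List Q}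
    {w1 w2 : List (VSym I C R)} (h1 : A.Run c1 w1 c2) (h2 : A.Run c2 w2 c3) :
    A.Run c1 (w1 ++ w2) c3 := by
  induction h1 with
  | nil => exact h2
  | cons s _ ih => exact .cons s (ih h2)

lemma RegRun.split {A : VRA I C R P Q} :
    ∀ {u1 u2 : List (I ⊕ P)} {q q' : Q}, A.RegRun q (u1 ++ u2) q' →
      ∃ m, A.RegRun q u1 m ∧ A.RegRun m u2 q' := by
  intro u1
  induction u1 with
  | nil => exact fun h => ⟨_, .nil _, h⟩
  | cons a u ih =>
    intro u2 q q' h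
    cases h with
    | int ht hr => obtain ⟨m, h1, h2⟩ := ih hr; exact ⟨m, .int ht h1, h2⟩
    | proc ht hr => obtain ⟨m, h1, h2⟩ := ih hr; exact ⟨m, .proc ht h1, h2⟩

lemma run_decomp (A : VRA I C R P Q) :
    ∀ {cfg : Q × List Q} {w : List (VSym I C R)} {cfg' : Q × List Q},
      A.Run cfg w cfg' → cfg'.2 = [] → Decomp cfg.2.length w := by
  intro cfg w cfg' h
  induction h with
  | nil cfg =>
    intro h2
    simp only [h2, List.length_nil]
    simpa using Decomp.zero (WellMatched.internal ([] : List I))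
  | cons step _ ih =>
    intro hend
    cases step with
    | int ht =>
      rename_i q q' σ a hrest
      have := (ih hend).prepend (WellMatched.internal [a])
      simpa using this
    | call ht hc hcomp hinit =>
      have hd := ih hend
      simp only [List.length_cons] at hd
      cases hd with
      | succ r hv hw =>
        rename_i q q' p σ J c v w' hrest
        have hb := hv.bracket c r
        have := Decomp.prepend hb hw
        simpa [List.append_assoc] using this
    | ret hcomp hfin hr =>
      rename_i q p σ J r hrest
      have := Decomp.succ r (WellMatched.internal ([] : List I)) (ih hend)
      simpa using this

lemma lift (A : VRA I C R P Q)
    (hcover : ∀ (c : C) (r : R),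
      (⋃ J ∈ {J : P | A.link J = (c, r)}, A.RegLang (some J)) = Set.univ)
    {w : List (VSym I C R)} (hw : WellMatched w) :
    ∃ u : List (I ⊕ P), ∀ q q' σ, A.RegRun q u q' → A.Run (q, σ) w (q', σ) := by
  induction hw with
  | internal us =>
    refine ⟨us.map Sum.inl, ?_⟩
    induction us with
    | nil =>
      intro q q' σ h
      cases h
      exact .nil _
    | cons a us ih =>
      intro q q' σ h
      simp only [List.map_cons] at h
      cases h with
      | int ht hr => exact .cons (.int ht) (ih _ _ _ hr)
  | bracket c r hw ih =>
    obtain ⟨u, hu⟩ := ih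
    have hmem : u ∈ (⋃ J ∈ {J : P | A.link J = (c, r)}, A.RegLang (some J)) := by
      rw [hcover]; trivial
    simp only [Set.mem_iUnion, Set.mem_setOf_eq] at hmem
    obtain ⟨J, hJ, hreg⟩ := hmem
    obtain ⟨qi, qf, hci, hii, hcf, hff, hrun⟩ := hreg
    refine ⟨[Sum.inr J], ?_⟩
    intro q q' σ h
    cases h with
    | proc ht hr =>
      cases hr
      refine Run.cons (Step.call ht (by rw [hJ]) hci hii) ?_
      exact Run.append_s11 (hu _ _ _ hrun)
        (Run.cons (Step.ret hcf hff (by rw [hJ])) (.nil _))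
  | concat h1 h2 ih1 ih2 =>
    obtain ⟨u1, hu1⟩ := ih1
    obtain ⟨u2, hu2⟩ := ih2
    refine ⟨u1 ++ u2, ?_⟩
    intro q q' σ h
    obtain ⟨m, ha, hb⟩ := RegRun.split h
    exact Run.append_s11 (hu1 _ _ _ ha) (hu2 _ _ _ hb)

end VRA

/-- if, for each call/return pair, the regular languages of the
linked components cover `(Σ_int ∪ Σ_proc)^*`, then their recursive languages
cover `WM(Σ̂)`. -/
theorem VRA.recLang_cover_of_regLang_cover {I C R P Q : Type}
    (A : VRA I C R P Q)
    (hcover : ∀ (c : C) (r : R),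
      (⋃ J ∈ {J : P | A.link J = (c, r)}, A.RegLang (some J)) = Set.univ) :
    ∀ (c : C) (r : R),
      (⋃ J ∈ {J : P | A.link J = (c, r)}, A.RecLang (some J)) =
        {w : List (VSym I C R) | WellMatched w} := by
  intro c r
  ext w
  simp only [Set.mem_iUnion, Set.mem_setOf_eq]
  constructor
  · rintro ⟨J, hJ, hmem⟩
    obtain ⟨qi, qf, hci, hii, hcf, hff, hrun⟩ := hmem
    have hd := A.run_decomp hrun rfl
    simp only [List.length_nil] at hd
    cases hd with
    | zero h => exact h
  · intro hw
    obtain ⟨u, hu⟩ := A.lift hcover hw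
    have hmem : u ∈ (⋃ J ∈ {J : P | A.link J = (c, r)}, A.RegLang (some J)) := by
      rw [hcover]; trivial
    simp only [Set.mem_iUnion, Set.mem_setOf_eq] at hmem
    obtain ⟨J, hJ, qi, qf, hci, hii, hcf, hff, hrun⟩ := hmem
    exact ⟨J, hJ, qi, qf, hci, hii, hcf, hff, hu qi qf [] hrun⟩
end
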